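/- A graph G has a perfect elimination ordering if and only if G is chordal (every induced cycle has length 3). -/

import Mathlib

namespace PEOAux
variable {V : Type*}

/-- restriction of `G` to a vertex set `W` -/
def Gr (G : SimpleGraph V) (W : Set V) : SimpleGraph V where
  Adj x y := x ∈ W ∧ y ∈ W ∧ G.Adj x y
  symm := by constructor; intro x y ⟨hx, hy, h⟩; exact ⟨hy, hx, h.symm⟩
  loopless := by constructor; intro x ⟨_, _, h⟩; exact G.irrefl h

/-- `p 0, p 1, …, p m` is a walk in `H`. -/
def IsChain (H : SimpleGraph V) (m : ℕ) (p : ℕ → V) : Prop :=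
  ∀ i, i < m → H.Adj (p i) (p (i + 1))

theorem chain_splice {H : SimpleGraph V} {m : ℕ} {p : ℕ → V} (hp : IsChain H m p)
    {i j : ℕ} (hij : i < j) (hjm : j ≤ m) (hadj : H.Adj (p i) (p j)) :
    ∃ q : ℕ → V, IsChain H (i + 1 + (m - j)) q ∧ q 0 = p 0 ∧ q (i + 1 + (m - j)) = p m := by
  refine ⟨fun k => if k ≤ i then p k else p (k + (j - i - 1)), ?_, by simp, ?_⟩
  · intro k hk
    rcases lt_trichotomy k i with h | rfl | h
    · beta_reduce; rw [if_pos h.le, if_pos (show k+1 ≤ i from h)]; exact hp k (by omega)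
    · simpa [show ¬ (k+1 ≤ k) by omega, show k + 1 + (j - k - 1) = j by omega] using hadj
    · have h1 : ¬ (k ≤ i) := by omega
      have h2 : ¬ (k + 1 ≤ i) := by omega
      simp only [h1, h2, if_false]
      have := hp (k + (j - i - 1)) (by omega)
      simpa [show k + 1 + (j - i - 1) = k + (j-i-1) + 1 by omega] using this
  · simp only [show ¬ (i + 1 + (m - j) ≤ i) by omega, if_false]
    congr 1; omega

theorem chain_glue {H : SimpleGraph V} {m : ℕ} {p : ℕ → V} (hp : IsChain H m p)
    {i j : ℕ} (hij : i < j) (hjm : j ≤ m) (heq : p i = p j) :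
    ∃ q : ℕ → V, IsChain H (i + (m - j)) q ∧ q 0 = p 0 ∧ q (i + (m - j)) = p m := by
  refine ⟨fun k => if k ≤ i then p k else p (k + (j - i)), ?_, by simp, ?_⟩
  · intro k hk
    rcases lt_trichotomy k i with h | rfl | h
    · beta_reduce; rw [if_pos h.le, if_pos (show k+1 ≤ i from h)]; exact hp k (by omega)
    · have : k < m - (j - k) + (j - k) := by omega
      simp only [le_refl, if_pos, show ¬ (k+1 ≤ k) by omega, if_false]
      rw [heq]
      simpa [show k + 1 + (j - k) = j + 1 by omega] using hp j (by omega)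
    · have h1 : ¬ (k ≤ i) := by omega
      have h2 : ¬ (k + 1 ≤ i) := by omega
      simp only [h1, h2, if_false]
      simpa [show k + 1 + (j - i) = k + (j-i) + 1 by omega] using hp (k + (j - i)) (by omega)
  · rcases eq_or_lt_of_le hjm with rfl | hlt
    · simp only [show i + (j - j) ≤ i by omega, if_pos]
      rw [show i + (j - j) = i by omega, heq]
    · simp only [show ¬ (i + (m - j) ≤ i) by omega, if_false]
      congr 1; omega

/-- a shortest chain between two vertices is an induced path -/
theorem exists_min_chain {H : SimpleGraph V} {x y : V}
    (hxy : ∃ m p, IsChain H m p ∧ p 0 = x ∧ p m = y) :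
    ∃ m p, IsChain H m p ∧ p 0 = x ∧ p m = y ∧
      (∀ i j, i < j → j ≤ m → p i ≠ p j) ∧
      (∀ i j, i < j → j ≤ m → (H.Adj (p i) (p j) ↔ j = i + 1)) := by
  classical
  have hex : ∃ m, ∃ p, IsChain H m p ∧ p 0 = x ∧ p m = y := by
    obtain ⟨m, p, h⟩ := hxy; exact ⟨m, p, h⟩
  obtain ⟨p, hp, h0, hm⟩ := Nat.find_spec hex
  set m := Nat.find hex with hmdef
  have hmin : ∀ m' < m, ¬ ∃ p, IsChain H m' p ∧ p 0 = x ∧ p m' = y := fun m' h =>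
    Nat.find_min hex h
  refine ⟨m, p, hp, h0, hm, ?_, ?_⟩
  · intro i j hij hjm heq
    obtain ⟨q, hq, hq0, hqm⟩ := chain_glue hp hij hjm heq
    exact hmin _ (by omega) ⟨q, hq, by rw [hq0, h0], by rw [hqm, hm]⟩
  · intro i j hij hjm
    constructor
    · intro hadj
      by_contra hne
      obtain ⟨q, hq, hq0, hqm⟩ := chain_splice hp hij hjm hadj
      exact hmin _ (by omega) ⟨q, hq, by rw [hq0, h0], by rw [hqm, hm]⟩
    · rintro rfl
      exact hp i (by omega)

theorem walk_chain {H : SimpleGraph V} {x y : V} (w : H.Walk x y) :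
    ∃ p, IsChain H w.length p ∧ p 0 = x ∧ p w.length = y ∧ ∀ i ≤ w.length, p i = w.getVert i := by
  exact ⟨w.getVert, fun i hi => w.adj_getVert_succ hi, w.getVert_zero, w.getVert_length,
    fun i _ => rfl⟩

theorem chain_cons {H : SimpleGraph V} {m : ℕ} {p : ℕ → V} {x : V}
    (hx : H.Adj x (p 0)) (hp : IsChain H m p) :
    ∃ q, IsChain H (m + 1) q ∧ q 0 = x ∧ q (m + 1) = p m ∧ ∀ i, 1 ≤ i → q i = p (i - 1) := by
  refine ⟨fun k => if k = 0 then x else p (k - 1), ?_, by simp, by simp, fun i hi => by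
    simp [show i ≠ 0 by omega]⟩
  intro i hi
  rcases Nat.eq_zero_or_pos i with rfl | h
  · simpa using hx
  · simp only [show i ≠ 0 by omega, show i + 1 ≠ 0 by omega, if_false]
    simpa [show i - 1 + 1 = i + 1 - 1 by omega] using hp (i-1) (by omega)

theorem chain_snoc {H : SimpleGraph V} {m : ℕ} {p : ℕ → V} {y : V}
    (hp : IsChain H m p) (hy : H.Adj (p m) y) :
    ∃ q, IsChain H (m + 1) q ∧ q 0 = p 0 ∧ q (m + 1) = y ∧ ∀ i ≤ m, q i = p i := by
  refine ⟨fun k => if k ≤ m then p k else y, ?_, by simp, by simp, fun i hi => by simp [hi]⟩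
  intro i hi
  rcases eq_or_lt_of_le (Nat.lt_succ_iff.mp hi) with rfl | h
  · simpa using hy
  · beta_reduce; rw [if_pos h.le, if_pos (show i+1 ≤ m from h)]; exact hp i h

/-- membership extraction: vertices of a chain in `Gr G W` lie in `W` -/
theorem chain_mem {G : SimpleGraph V} {W : Set V} {m : ℕ} {p : ℕ → V}
    (hp : IsChain (Gr G W) m p) {i : ℕ} (hi : i ≤ m) (hm : 0 < m) : p i ∈ W := by
  rcases eq_or_lt_of_le hi with rfl | h
  · have := hp (i-1) (by omega)
    rw [show i - 1 + 1 = i by omega] at this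
    exact this.2.1
  · exact (hp i h).1

theorem reach_closed {H : SimpleGraph V} {C : Set V}
    (hC : ∀ x y, x ∈ C → H.Adj x y → y ∈ C) {x y : V} (h : H.Reachable x y) (hx : x ∈ C) :
    y ∈ C := by
  obtain ⟨w⟩ := h
  induction w with
  | nil => exact hx
  | cons h w ih => exact ih (hC _ _ hx h)


def Chordal (G : SimpleGraph V) : Prop :=
  ∀ (k : ℕ) (c : Fin (k + 4) → V), Function.Injective c →
    (∀ s t, G.Adj (c s) (c t) ↔ (t = s + 1 ∨ s = t + 1)) → False

theorem fin_succ_iff {k : ℕ} (a b : Fin (k + 4)) :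
    (b = a + 1) ↔ ((b : ℕ) = (a : ℕ) + 1 ∨ ((a : ℕ) = k + 3 ∧ (b : ℕ) = 0)) := by
  have h1 : ((1 : Fin (k + 4)) : ℕ) = 1 := by simp
  have hval : ((a + 1 : Fin (k + 4)) : ℕ) = ((a : ℕ) + 1) % (k + 4) := by
    rw [Fin.add_def]; simp [h1]
  rw [Fin.ext_iff, hval]
  have ha := a.isLt
  have hb := b.isLt
  rcases Nat.lt_or_ge ((a : ℕ) + 1) (k + 4) with h | h
  · rw [Nat.mod_eq_of_lt h]; omega
  · have h2 : (a : ℕ) + 1 = k + 4 := by omega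
    rw [h2, Nat.mod_self]; omega

/-- the key chordality consequence: no "theta" configuration; used to prove
minimal separators are cliques. -/
theorem sep_clique (G : SimpleGraph V) (hG : Chordal G) (A B : Set V) (t u : V)
    (htu : t ≠ u) (hadj : ¬G.Adj t u)
    (hAB : ∀ x ∈ A, ∀ y ∈ B, x ≠ y ∧ ¬G.Adj x y)
    (hA : ∃ m p, IsChain (Gr G (A ∪ {t, u})) m p ∧ p 0 = t ∧ p m = u)
    (hB : ∃ m p, IsChain (Gr G (B ∪ {t, u})) m p ∧ p 0 = u ∧ p m = t) :
    False := by
  classical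
  obtain ⟨m₁, p, hp, hp0, hpm, hpne, hpadj⟩ := exists_min_chain hA
  obtain ⟨m₂, q, hq, hq0, hqm, hqne, hqadj⟩ := exists_min_chain hB
  set H₁ := Gr G (A ∪ {t, u}) with hH₁
  set H₂ := Gr G (B ∪ {t, u}) with hH₂
  -- lengths at least 2
  have hm₁0 : m₁ ≠ 0 := by rintro rfl; exact htu (hp0 ▸ hpm ▸ rfl)
  have hm₂0 : m₂ ≠ 0 := by rintro rfl; exact htu ((hqm ▸ hq0 ▸ rfl) : u = t).symm
  have hm₁1 : m₁ ≠ 1 := by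
    rintro rfl
    exact hadj (hp0 ▸ hpm ▸ (hp 0 (by omega)).2.2)
  have hm₂1 : m₂ ≠ 1 := by
    rintro rfl
    exact hadj (hq0 ▸ hqm ▸ (hq 0 (by omega)).2.2).symm
  have hm₁ : 2 ≤ m₁ := by omega
  have hm₂ : 2 ≤ m₂ := by omega
  -- membership of chain vertices
  have hpW : ∀ i ≤ m₁, p i ∈ A ∪ {t, u} := fun i hi => chain_mem hp hi (by omega)
  have hqW : ∀ i ≤ m₂, q i ∈ B ∪ {t, u} := fun i hi => chain_mem hq hi (by omega)
  have hpint : ∀ i, 0 < i → i < m₁ → p i ∈ A := by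
    intro i h0 hi
    rcases hpW i hi.le with h | h
    · exact h
    · exfalso; rcases h with h | h
      · exact hpne 0 i h0 hi.le (hp0.trans h.symm)
      · exact hpne i m₁ hi le_rfl (h.trans hpm.symm)
  have hqint : ∀ i, 0 < i → i < m₂ → q i ∈ B := by
    intro i h0 hi
    rcases hqW i hi.le with h | h
    · exact h
    · exfalso; rcases h with h | h
      · exact hqne i m₂ hi le_rfl (h.trans hqm.symm)
      · exact hqne 0 i h0 hi.le (hq0.trans h.symm)
  -- G-adjacency coincides with restricted adjacency on the chain vertices
  have hGp : ∀ i ≤ m₁, ∀ j ≤ m₁, (G.Adj (p i) (p j) ↔ H₁.Adj (p i) (p j)) := by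
    intro i hi j hj
    exact ⟨fun h => ⟨hpW i hi, hpW j hj, h⟩, fun h => h.2.2⟩
  have hGq : ∀ i ≤ m₂, ∀ j ≤ m₂, (G.Adj (q i) (q j) ↔ H₂.Adj (q i) (q j)) := by
    intro i hi j hj
    exact ⟨fun h => ⟨hqW i hi, hqW j hj, h⟩, fun h => h.2.2⟩
  set n := m₁ + m₂ with hn
  set c' : ℕ → V := fun i => if i ≤ m₁ then p i else q (i - m₁) with hc'
  have hc'q : ∀ i, m₁ ≤ i → c' i = q (i - m₁) := by
    intro i hi
    rcases eq_or_lt_of_le hi with rfl | h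
    · simp [hc', hpm, hq0.symm]
    · simp [hc', show ¬ (i ≤ m₁) by omega]
  have hc'p : ∀ i ≤ m₁, c' i = p i := fun i hi => by simp [hc', hi]
  -- main combinatorial claims
  have claim : ∀ i j, i < j → j < n →
      (c' i ≠ c' j) ∧ (G.Adj (c' i) (c' j) ↔ (j = i + 1 ∨ (i = 0 ∧ j = n - 1))) := by
    intro i j hij hjn
    rcases le_or_gt j m₁ with hj | hj
    · -- both on p
      rw [hc'p i (by omega), hc'p j hj]
      refine ⟨hpne i j hij hj, ?_⟩
      rw [hGp i (by omega) j hj, hpadj i j hij hj]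
      have : ¬ (i = 0 ∧ j = n - 1) := by omega
      tauto
    · rcases le_or_gt m₁ i with hi | hi
      · -- both on q
        rw [hc'q i hi, hc'q j (by omega)]
        have h1 : i - m₁ < j - m₁ := by omega
        have h2 : j - m₁ ≤ m₂ := by omega
        refine ⟨hqne _ _ h1 h2, ?_⟩
        rw [hGq _ (by omega) _ h2, hqadj _ _ h1 h2]
        have : ¬ (i = 0 ∧ j = n - 1) := by omega
        omega
      · -- i on p side, j strictly inside q side
        rw [hc'p i hi.le, hc'q j (by omega)]
        have hjq : q (j - m₁) ∈ B := hqint _ (by omega) (by omega)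
        rcases Nat.eq_zero_or_pos i with rfl | hi0
        · -- i = 0 : vertex t = q m₂
          have h2 : j - m₁ < m₂ := by omega
          have ht : p 0 = q m₂ := by rw [hp0, hqm]
          rw [ht]
          constructor
          · exact fun h => hqne _ _ h2 le_rfl h.symm
          · rw [G.adj_comm, hGq _ h2.le _ le_rfl, hqadj _ _ h2 le_rfl]
            omega
        · -- i interior of p : in A, no adjacency to B
          have hip : p i ∈ A := hpint i hi0 hi
          obtain ⟨hne, hnadj⟩ := hAB _ hip _ hjq
          refine ⟨hne, ?_⟩
          have : ¬ (j = i + 1 ∨ (i = 0 ∧ j = n - 1)) := by omega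
          tauto
  -- build the cycle
  obtain ⟨k, hk⟩ : ∃ k, n = k + 4 := ⟨n - 4, by omega⟩
  set c : Fin (k + 4) → V := fun i => c' i.val with hcdef
  have hlt : ∀ i : Fin (k + 4), (i : ℕ) < n := fun i => by have := i.isLt; omega
  have hinj : Function.Injective c := by
    intro a b hab
    simp only [hcdef] at hab
    by_contra hne
    rcases Nat.lt_or_ge (a : ℕ) (b : ℕ) with h | h
    · exact (claim _ _ h (hlt b)).1 hab
    · rcases Nat.lt_or_ge (b : ℕ) (a : ℕ) with h' | h'
      · exact (claim _ _ h' (hlt a)).1 hab.symm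
      · exact hne (Fin.ext (by omega))
  refine hG k c hinj ?_
  intro a b
  simp only [hcdef]
  rw [fin_succ_iff a b, fin_succ_iff b a]
  rcases lt_trichotomy (a : ℕ) (b : ℕ) with h | h | h
  · rw [(claim _ _ h (hlt b)).2]
    have hbn := hlt b
    omega
  · have hab : a = b := Fin.ext h
    subst hab
    simp only [SimpleGraph.irrefl, false_iff]
    have := hlt a
    omega
  · rw [G.adj_comm, (claim _ _ h (hlt a)).2]
    have := hlt a
    omega


def Simp (G : SimpleGraph V) (s : Set V) (v : V) : Prop :=
  v ∈ s ∧ ∀ x ∈ s, ∀ y ∈ s, G.Adj v x → G.Adj v y → x ≠ y → G.Adj x y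

theorem dirac (G : SimpleGraph V) (hG : Chordal G) (s : Finset V) :
    (∀ x ∈ s, ∀ y ∈ s, x ≠ y → G.Adj x y) ∨
    (∃ a ∈ s, ∃ b ∈ s, a ≠ b ∧ ¬G.Adj a b ∧ Simp G ↑s a ∧ Simp G ↑s b) := by
  classical
  induction s using Finset.strongInduction with
  | _ s ih =>
  by_cases hcl : ∀ x ∈ s, ∀ y ∈ s, x ≠ y → G.Adj x y
  · exact Or.inl hcl
  push_neg at hcl
  obtain ⟨a, ha, b, hb, hab, hnadj⟩ := hcl
  right
  -- separators
  set Sep : Finset V → Prop := fun T => T ⊆ s \ {a, b} ∧ ¬(Gr G ↑(s \ T)).Reachable a b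
    with hSep
  have hsep0 : Sep (s \ {a, b}) := by
    refine ⟨Finset.Subset.refl _, fun hr => ?_⟩
    obtain ⟨w⟩ := hr
    cases w with
    | nil => exact hab rfl
    | cons h w =>
      obtain ⟨hx, hy, hxy⟩ := h
      have : _ ∈ s \ (s \ {a, b}) := hy
      rw [Finset.sdiff_sdiff_self_left] at this
      have hmem := Finset.mem_of_mem_inter_right this
      simp only [Finset.mem_insert, Finset.mem_singleton] at hmem
      rcases hmem with rfl | rfl
      · exact G.irrefl hxy
      · exact hnadj hxy
  have hex : ∃ nn, ∃ T, Sep T ∧ T.card = nn := ⟨_, _, hsep0, rfl⟩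
  obtain ⟨T, hT, hTcard⟩ := Nat.find_spec hex
  set nn := Nat.find hex with hnn
  have hmin : ∀ T', Sep T' → nn ≤ T'.card := by
    intro T' hT'
    by_contra h
    exact Nat.find_min hex (by omega) ⟨T', hT', rfl⟩
  obtain ⟨hTsub, hTreach⟩ := hT
  set GT := Gr G ↑(s \ T) with hGT
  set A : Finset V := (s \ T).filter (fun x => GT.Reachable a x) with hA
  set B : Finset V := (s \ T).filter (fun x => GT.Reachable b x) with hB
  have haT : a ∉ T := fun h => by simpa using (hTsub h)
  have hbT : b ∉ T := fun h => by simpa using (hTsub h)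
  have haA : a ∈ A := by
    rw [hA, Finset.mem_filter]
    exact ⟨Finset.mem_sdiff.mpr ⟨ha, haT⟩, SimpleGraph.Reachable.refl a⟩
  have hbB : b ∈ B := by
    rw [hB, Finset.mem_filter]
    exact ⟨Finset.mem_sdiff.mpr ⟨hb, hbT⟩, SimpleGraph.Reachable.refl b⟩
  have hbA : b ∉ A := by
    rw [hA, Finset.mem_filter]
    rintro ⟨-, h⟩; exact hTreach h
  have haB : a ∉ B := by
    rw [hB, Finset.mem_filter]
    rintro ⟨-, h⟩; exact hTreach h.symm
  have hAcl : ∀ x ∈ A, ∀ y ∈ s \ T, G.Adj x y → y ∈ A := by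
    intro x hx y hy hxy
    rw [hA, Finset.mem_filter] at hx ⊢
    exact ⟨hy, hx.2.trans (SimpleGraph.Adj.reachable ⟨hx.1, hy, hxy⟩)⟩
  have hBcl : ∀ x ∈ B, ∀ y ∈ s \ T, G.Adj x y → y ∈ B := by
    intro x hx y hy hxy
    rw [hB, Finset.mem_filter] at hx ⊢
    exact ⟨hy, hx.2.trans (SimpleGraph.Adj.reachable ⟨hx.1, hy, hxy⟩)⟩
  have hABsep : ∀ x ∈ A, ∀ y ∈ B, x ≠ y ∧ ¬G.Adj x y := by
    intro x hx y hy
    rw [hA, Finset.mem_filter] at hx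
    rw [hB, Finset.mem_filter] at hy
    constructor
    · rintro rfl; exact hTreach (hx.2.trans hy.2.symm)
    · intro hxy
      exact hTreach ((hx.2.trans (SimpleGraph.Adj.reachable ⟨hx.1, hy.1, hxy⟩)).trans hy.2.symm)
  -- every separator vertex has a neighbour in A and in B
  have hTA : ∀ t ∈ T, ∃ x ∈ A, G.Adj t x := by
    intro t ht
    by_contra hno
    push_neg at hno
    have hsep' : Sep (T.erase t) := by
      refine ⟨(Finset.erase_subset _ _).trans hTsub, fun hr => ?_⟩
      have hcl' : ∀ x y, x ∈ (↑A : Set V) → (Gr G ↑(s \ T.erase t)).Adj x y → y ∈ (↑A : Set V) := by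
        intro x y hx ⟨hx', hy', hxy⟩
        simp only [Finset.coe_sdiff, Set.mem_diff, Finset.mem_coe] at hy'
        by_cases hyt : y = t
        · subst hyt
          exact absurd hxy.symm (hno x hx)
        · have : y ∈ s \ T := Finset.mem_sdiff.mpr ⟨hy'.1, fun h => hy'.2 (Finset.mem_erase.mpr ⟨hyt, h⟩)⟩
          exact hAcl x hx y this hxy
      have : b ∈ (↑A : Set V) := reach_closed hcl' hr haA
      exact hbA this
    have := hmin _ hsep'
    rw [Finset.card_erase_of_mem ht] at this
    have h1 : 1 ≤ T.card := Finset.card_pos.mpr ⟨t, ht⟩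
    omega
  have hTB : ∀ t ∈ T, ∃ x ∈ B, G.Adj t x := by
    intro t ht
    by_contra hno
    push_neg at hno
    have hsep' : Sep (T.erase t) := by
      refine ⟨(Finset.erase_subset _ _).trans hTsub, fun hr => ?_⟩
      have hcl' : ∀ x y, x ∈ (↑B : Set V) → (Gr G ↑(s \ T.erase t)).Adj x y → y ∈ (↑B : Set V) := by
        intro x y hx ⟨hx', hy', hxy⟩
        simp only [Finset.coe_sdiff, Set.mem_diff, Finset.mem_coe] at hy'
        by_cases hyt : y = t
        · subst hyt
          exact absurd hxy.symm (hno x hx)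
        · have : y ∈ s \ T := Finset.mem_sdiff.mpr ⟨hy'.1, fun h => hy'.2 (Finset.mem_erase.mpr ⟨hyt, h⟩)⟩
          exact hBcl x hx y this hxy
      have : a ∈ (↑B : Set V) := reach_closed hcl' hr.symm hbB
      exact haB this
    have := hmin _ hsep'
    rw [Finset.card_erase_of_mem ht] at this
    have h1 : 1 ≤ T.card := Finset.card_pos.mpr ⟨t, ht⟩
    omega
  -- connect within a component
  have hconn : ∀ (C : Finset V), (∀ x ∈ C, ∀ y ∈ s \ T, G.Adj x y → y ∈ C) →
      (∀ x ∈ C, x ∈ s \ T) →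
      ∀ (t u x₁ x₂ : V), t ≠ u → x₁ ∈ C → x₂ ∈ C → GT.Reachable x₁ x₂ →
      G.Adj t x₁ → G.Adj x₂ u →
      ∃ m p, IsChain (Gr G (↑C ∪ {t, u})) m p ∧ p 0 = t ∧ p m = u := by
    intro C hCcl hCsub t u x₁ x₂ htu hx₁ hx₂ hreach ht hu
    obtain ⟨w⟩ := hreach
    obtain ⟨p, hp, hp0, hpm, -⟩ := walk_chain w
    -- all chain vertices lie in C
    have hmem : ∀ i ≤ w.length, p i ∈ C := by
      intro i hi
      induction i with
      | zero => exact hp0 ▸ hx₁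
      | succ n ihn =>
        have hn := ihn (by omega)
        have := hp n (by omega)
        exact hCcl _ hn _ (this.2.1) this.2.2
    -- reinterpret as chain in Gr G (C ∪ {t,u})
    have hp' : IsChain (Gr G (↑C ∪ {t, u})) w.length p := by
      intro i hi
      exact ⟨Or.inl (hmem i hi.le), Or.inl (hmem (i+1) hi), (hp i hi).2.2⟩
    obtain ⟨q, hq, hq0, hqm, hqi⟩ := chain_cons
      (show (Gr G (↑C ∪ {t, u})).Adj t (p 0) from
        ⟨Or.inr (by simp), Or.inl (hmem 0 (by omega)), hp0 ▸ ht⟩) hp'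
    obtain ⟨r, hr, hr0, hrm, -⟩ := chain_snoc hq
      (show (Gr G (↑C ∪ {t, u})).Adj (q (w.length + 1)) u from by
        rw [hqm, hpm]
        exact ⟨Or.inl (Finset.mem_coe.mpr (hpm ▸ hmem _ le_rfl)), Or.inr (by simp), hu⟩)
    exact ⟨w.length + 2, r, by rwa [show w.length + 2 = w.length + 1 + 1 from rfl],
      by rw [hr0, hq0], by rw [show w.length + 2 = w.length + 1 + 1 from rfl, hrm]⟩
  -- T is a clique
  have hTcl : ∀ t ∈ T, ∀ u ∈ T, t ≠ u → G.Adj t u := by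
    intro t ht u hu htu
    by_contra hne
    obtain ⟨x₁, hx₁, htx₁⟩ := hTA t ht
    obtain ⟨x₂, hx₂, hux₂⟩ := hTA u hu
    obtain ⟨y₁, hy₁, huy₁⟩ := hTB u hu
    obtain ⟨y₂, hy₂, hty₂⟩ := hTB t ht
    have hrA : GT.Reachable x₁ x₂ := by
      rw [hA, Finset.mem_filter] at hx₁ hx₂
      exact hx₁.2.symm.trans hx₂.2
    have hrB : GT.Reachable y₁ y₂ := by
      rw [hB, Finset.mem_filter] at hy₁ hy₂
      exact hy₁.2.symm.trans hy₂.2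
    refine sep_clique G hG ↑A ↑B t u htu hne ?_ ?_ ?_
    · intro x hx y hy; exact hABsep x hx y hy
    · exact hconn A hAcl (fun x hx => (Finset.mem_filter.mp (hA ▸ hx)).1) t u x₁ x₂ htu
        hx₁ hx₂ hrA htx₁ hux₂.symm
    · have := hconn B hBcl (fun x hx => (Finset.mem_filter.mp (hB ▸ hx)).1) u t y₁ y₂
        (Ne.symm htu) hy₁ hy₂ hrB huy₁ hty₂.symm
      rwa [Set.pair_comm u t] at this
  -- find a simplicial vertex inside a component
  have side : ∀ (C : Finset V) (v₀ w : V), v₀ ∈ C → C ⊆ s \ T →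
      (∀ x ∈ C, ∀ y ∈ s \ T, G.Adj x y → y ∈ C) →
      w ∈ s → w ∉ C → w ∉ T →
      ∃ v ∈ C, Simp G ↑s v := by
    intro C v₀ w hv₀ hCsub hCcl hw hwC hwT
    set s1 : Finset V := C ∪ T with hs1
    have hs1sub : s1 ⊂ s := by
      refine Finset.ssubset_iff_of_subset ?_ |>.mpr ⟨w, hw, ?_⟩
      · intro x hx
        rcases Finset.mem_union.mp hx with h | h
        · exact (Finset.mem_sdiff.mp (hCsub h)).1
        · exact (Finset.mem_sdiff.mp (hTsub h)).1
      · intro hx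
        rcases Finset.mem_union.mp hx with h | h
        · exact hwC h
        · exact hwT h
    -- neighbours in s of a C-vertex stay in s1
    have hclose : ∀ v ∈ C, ∀ x ∈ s, G.Adj v x → x ∈ s1 := by
      intro v hv x hx hvx
      by_cases hxT : x ∈ T
      · exact Finset.mem_union.mpr (Or.inr hxT)
      · exact Finset.mem_union.mpr (Or.inl (hCcl v hv x (Finset.mem_sdiff.mpr ⟨hx, hxT⟩) hvx))
    have transfer : ∀ v ∈ C, Simp G ↑s1 v → Simp G ↑s v := by
      intro v hv hsimp
      refine ⟨Finset.mem_coe.mpr ((Finset.mem_sdiff.mp (hCsub hv)).1), ?_⟩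
      intro x hx y hy hvx hvy hxy
      exact hsimp.2 x (hclose v hv x hx hvx) y (hclose v hv y hy hvy) hvx hvy hxy
    rcases ih s1 hs1sub with hcl1 | ⟨a', ha', b', hb', hab', hnadj', hsa', hsb'⟩
    · refine ⟨v₀, hv₀, transfer v₀ hv₀ ⟨Finset.mem_coe.mpr (Finset.mem_union.mpr (Or.inl hv₀)), ?_⟩⟩
      intro x hx y hy _ _ hxy
      exact hcl1 x hx y hy hxy
    · -- one of a', b' lies in C
      have : a' ∈ C ∨ b' ∈ C := by
        by_contra hcon
        push_neg at hcon
        have ha'T : a' ∈ T := (Finset.mem_union.mp ha').resolve_left hcon.1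
        have hb'T : b' ∈ T := (Finset.mem_union.mp hb').resolve_left hcon.2
        exact hnadj' (hTcl a' ha'T b' hb'T hab')
      rcases this with h | h
      · exact ⟨a', h, transfer a' h hsa'⟩
      · exact ⟨b', h, transfer b' h hsb'⟩
  obtain ⟨va, hvaA, hva⟩ := side A a b haA
    (fun x hx => (Finset.mem_filter.mp (hA ▸ hx)).1) hAcl hb hbA hbT
  obtain ⟨vb, hvbB, hvb⟩ := side B b a hbB
    (fun x hx => (Finset.mem_filter.mp (hB ▸ hx)).1) hBcl ha haB haT
  obtain ⟨hvne, hvnadj⟩ := hABsep va hvaA vb hvbB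
  exact ⟨va, hva.1, vb, hvb.1, hvne, hvnadj, hva, hvb⟩


theorem exists_simp (G : SimpleGraph V) (hG : Chordal G) (s : Finset V) (hs : s.Nonempty) :
    ∃ v ∈ s, Simp G ↑s v := by
  rcases dirac G hG s with hcl | ⟨a, ha, b, hb, -, -, hsa, -⟩
  · obtain ⟨v, hv⟩ := hs
    exact ⟨v, hv, Finset.mem_coe.mpr hv, fun x hx y hy _ _ hxy => hcl x hx y hy hxy⟩
  · exact ⟨a, ha, hsa⟩

def PEOl (G : SimpleGraph V) : List V → Prop
  | [] => True
  | v :: l => Simp G {x | x ∈ v :: l} v ∧ PEOl G l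

theorem exists_peol (G : SimpleGraph V) (hG : Chordal G) (s : Finset V) :
    ∃ l : List V, l.Nodup ∧ (∀ x, x ∈ l ↔ x ∈ s) ∧ PEOl G l := by
  classical
  induction s using Finset.strongInduction with
  | _ s ih =>
  rcases s.eq_empty_or_nonempty with rfl | hs
  · exact ⟨[], List.nodup_nil, fun x => by simp, trivial⟩
  obtain ⟨v, hv, hsimp⟩ := exists_simp G hG s hs
  obtain ⟨l', hnd, hmem, hpeo⟩ := ih (s.erase v) (Finset.erase_ssubset hv)
  refine ⟨v :: l', ?_, ?_, ?_, hpeo⟩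
  · exact List.nodup_cons.mpr ⟨fun h => (Finset.notMem_erase v s) ((hmem v).mp h), hnd⟩
  · intro x
    simp only [List.mem_cons, hmem, Finset.mem_erase]
    constructor
    · rintro (rfl | ⟨-, h⟩) <;> [exact hv; exact h]
    · intro h
      by_cases hxv : x = v
      · exact Or.inl hxv
      · exact Or.inr ⟨hxv, h⟩
  · have hset : {x | x ∈ v :: l'} = (↑s : Set V) := by
      ext x
      simp only [Set.mem_setOf_eq, List.mem_cons, hmem, Finset.mem_erase, Finset.mem_coe]
      constructor
      · rintro (rfl | ⟨-, h⟩) <;> [exact hv; exact h]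
      · intro h
        by_cases hxv : x = v
        · exact Or.inl hxv
        · exact Or.inr ⟨hxv, h⟩
    rw [hset]
    exact hsimp

theorem peol_drop (G : SimpleGraph V) {l : List V} (hl : PEOl G l) :
    ∀ i (h : i < l.length), Simp G {x | x ∈ l.drop i} (l.get ⟨i, h⟩) := by
  induction l with
  | nil => intro i h; simp at h
  | cons v t iht =>
    intro i h
    match i with
    | 0 => exact hl.1
    | (n + 1) =>
      have := iht hl.2 n (by simpa using h)
      simpa using this


end PEOAux

/-- `e` is a perfect elimination ordering of `G`. -/
def IsPEO {V : Type*} (G : SimpleGraph V) {n : ℕ} (e : Fin n ≃ V) : Prop :=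
  ∀ i j k : Fin n, i < j → i < k → j ≠ k →
    G.Adj (e i) (e j) → G.Adj (e i) (e k) → G.Adj (e j) (e k)


open PEOAux in
/-- a finite graph has a perfect elimination ordering iff it is chordal
(no induced cycles of length ≥ 4, i.e. every induced cycle is a triangle). -/
theorem stmt3 (V : Type*) [Fintype V] (G : SimpleGraph V) :
    (∃ e : Fin (Fintype.card V) ≃ V, IsPEO G e) ↔
      (∀ (k : ℕ) (c : Fin (k + 4) → V), Function.Injective c →
        (∀ s t, G.Adj (c s) (c t) ↔ (t = s + 1 ∨ s = t + 1)) → False) := by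
  classical
  constructor
  · -- a PEO implies chordality
    rintro ⟨e, he⟩ k c hinj hadj
    set f : Fin (k + 4) → Fin (Fintype.card V) := fun s => e.symm (c s) with hf
    have hfinj : Function.Injective f := fun a b h => hinj (e.symm.injective h)
    obtain ⟨s₀, -, hmin⟩ := Finset.exists_min_image Finset.univ f ⟨0, Finset.mem_univ 0⟩
    set s₁ : Fin (k + 4) := s₀ - 1 with hs₁
    have hsub : s₁ + 1 = s₀ := sub_add_cancel s₀ 1
    have h1 : s₀ + 1 ≠ s₀ := by
      intro h
      have := (fin_succ_iff s₀ (s₀ + 1)).mp rfl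
      have h2 := congrArg Fin.val h
      have := s₀.isLt
      omega
    have h2 : s₁ ≠ s₀ := fun h => h1 (h ▸ hsub)
    have h3 : s₀ + 1 ≠ s₁ := by
      intro h
      have e1 := (fin_succ_iff s₀ (s₀ + 1)).mp rfl
      have e2 := (fin_succ_iff s₁ s₀).mp hsub.symm
      have h4 := congrArg Fin.val h
      have := s₀.isLt
      have := s₁.isLt
      have := (s₀ + 1).isLt
      omega
    have hadj1 : G.Adj (c s₀) (c (s₀ + 1)) := (hadj s₀ (s₀ + 1)).mpr (Or.inl rfl)
    have hadj2 : G.Adj (c s₀) (c s₁) := (hadj s₀ s₁).mpr (Or.inr hsub.symm)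
    have hij : f s₀ < f (s₀ + 1) :=
      lt_of_le_of_ne (hmin _ (Finset.mem_univ _)) (fun h => h1 (hfinj h.symm))
    have hik : f s₀ < f s₁ :=
      lt_of_le_of_ne (hmin _ (Finset.mem_univ _)) (fun h => h2 (hfinj h.symm))
    have hjk : f (s₀ + 1) ≠ f s₁ := fun h => h3 (hfinj h)
    have := he (f s₀) (f (s₀ + 1)) (f s₁) hij hik hjk
      (by simpa [hf] using hadj1) (by simpa [hf] using hadj2)
    simp only [hf, Equiv.apply_symm_apply] at this
    rcases (hadj _ _).mp this with h | h
    · -- s₁ = (s₀ + 1) + 1 and s₀ = s₁ + 1 : impossible mod k+4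
      have e1 := (fin_succ_iff s₀ (s₀ + 1)).mp rfl
      have e2 := (fin_succ_iff (s₀ + 1) ((s₀ + 1) + 1)).mp rfl
      have e3 := (fin_succ_iff s₁ s₀).mp hsub.symm
      have e4 := congrArg Fin.val h
      have := s₀.isLt
      have := (s₀ + 1).isLt
      have := ((s₀ + 1) + 1).isLt
      have := s₁.isLt
      omega
    · rw [hsub] at h
      exact h1 h
  · -- chordal implies a PEO exists
    intro hG
    obtain ⟨l, hnd, hmem, hpeo⟩ := exists_peol G hG Finset.univ
    have hlen : l.length = Fintype.card V := by
      have h1 : l.toFinset = Finset.univ := by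
        ext x; simp [hmem x]
      have h2 := List.toFinset_card_of_nodup hnd
      rw [h1] at h2
      simpa [Finset.card_univ] using h2.symm
    set fe : Fin (Fintype.card V) → V := fun i => l.get (Fin.cast hlen.symm i) with hfe
    have hfeinj : Function.Injective fe := by
      intro a b h
      have := (List.nodup_iff_injective_get.mp hnd) h
      exact Fin.ext (by simpa [Fin.ext_iff] using this)
    have hbij : Function.Bijective fe :=
      (Fintype.bijective_iff_injective_and_card fe).mpr ⟨hfeinj, by simp⟩
    refine ⟨Equiv.ofBijective fe hbij, ?_⟩
    intro i j k hij hik hjk hadj1 hadj2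
    have hei : ∀ m : Fin (Fintype.card V), (Equiv.ofBijective fe hbij) m = fe m := fun m => rfl
    simp only [hei] at hadj1 hadj2 ⊢
    have hil : (i : ℕ) < l.length := by rw [hlen]; exact i.isLt
    have hdrop := peol_drop G hpeo i.val hil
    have hmemdrop : ∀ (m : Fin (Fintype.card V)), i < m → fe m ∈ {x | x ∈ l.drop (i : ℕ)} := by
      intro m him
      have hml : (m : ℕ) < l.length := by rw [hlen]; exact m.isLt
      have him' : (i : ℕ) < (m : ℕ) := him
      have hb : (m : ℕ) - (i : ℕ) < (l.drop (i : ℕ)).length := by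
        rw [List.length_drop]; omega
      have heq : (l.drop (i : ℕ))[(m : ℕ) - (i : ℕ)]'hb = fe m := by
        rw [List.getElem_drop]
        simp only [hfe, List.get_eq_getElem, Fin.coe_cast]
        congr 1
        omega
      rw [Set.mem_setOf_eq, ← heq]
      exact List.getElem_mem _
    have hne : fe j ≠ fe k := fun h => hjk (hfeinj h)
    exact hdrop.2 _ (hmemdrop j hij) _ (hmemdrop k hik) hadj1 hadj2 hne
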